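/- If the pitch dynamics satisfy θ''(t) = (φ'(t)·ψ'(t)·(I_z − I_x) + τ(t))/I_y, where the control torque is τ = τ_eq + τ_sw with τ_eq = I_y·(v' − γ(θ' − ᵈθ')) − φ'ψ'(I_z − I_x) and τ_sw = −I_y·(c₁·sg(s) + c₂·s), then the Lyapunov function V(t) = (1/2)s(t)² has derivative V'(t) = −c₁·s(t)·sg(s(t)) − c₂·s(t)² ≤ 0 for all t; hence the pitch angle control system is Lyapunov stable. -/

import Mathlib

/-- The saturated sign function with parameter `ε`. -/
noncomputable def sg (ε x : ℝ) : ℝ :=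
  if x > ε then 1 else if x < -ε then -1 else x / ε

lemma sg_mul_nonneg {ε : ℝ} (hε : 0 < ε) (x : ℝ) : 0 ≤ x * sg ε x := by
  unfold sg
  split_ifs with h1 h2
  · nlinarith
  · nlinarith
  · have : x * (x / ε) = x ^ 2 / ε := by ring
    rw [this]; positivity

/-- Under the pitch-torque law `τ = τ_eq + τ_sw`, the Lyapunov function
`V = (1/2)s²` has derivative `−c₁·s·sg(s) − c₂·s² ≤ 0`; the pitch angle
control system is Lyapunov stable. -/
theorem pitch_controller_stable
    (ε lam γ c₁ c₂ Ix Iy Iz : ℝ) (hε0 : 0 < ε) (hε1 : ε < 1)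
    (hlam : 0 < lam) (hγ : 0 < γ) (hc₁ : 0 < c₁) (hc₂ : 0 < c₂) (hIy : Iy ≠ 0)
    (θ dθ φ ψ : ℝ → ℝ)
    (hθ : Differentiable ℝ θ) (hθ' : Differentiable ℝ (deriv θ))
    (hdθ : Differentiable ℝ dθ) (hdθ' : Differentiable ℝ (deriv dθ))
    (hφ : Differentiable ℝ φ) (hφ' : Differentiable ℝ (deriv φ))
    (hψ : Differentiable ℝ ψ) (hψ' : Differentiable ℝ (deriv ψ))
    (e v s tau : ℝ → ℝ)
    (he : e = fun t => θ t - dθ t)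
    (hv : v = fun t => deriv dθ t - lam * e t)
    (hs : s = fun t => γ * e t + (deriv θ t - v t))
    (htau : ∀ t, tau t
        = (Iy * (deriv v t - γ * (deriv θ t - deriv dθ t))
            - deriv φ t * deriv ψ t * (Iz - Ix))
          + (-(Iy * (c₁ * sg ε (s t) + c₂ * s t))))
    (hdyn : ∀ t, deriv (deriv θ) t
        = (deriv φ t * deriv ψ t * (Iz - Ix) + tau t) / Iy) :
    ∀ t, HasDerivAt (fun r => (1 / 2 : ℝ) * s r ^ 2)
        (-(c₁ * s t * sg ε (s t)) - c₂ * s t ^ 2) t ∧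
      -(c₁ * s t * sg ε (s t)) - c₂ * s t ^ 2 ≤ 0 := by
  intro t
  -- derivative of e
  have hE : ∀ r, HasDerivAt e (deriv θ r - deriv dθ r) r := by
    intro r
    rw [he]
    exact ((hθ r).hasDerivAt.sub (hdθ r).hasDerivAt)
  -- derivative of v
  have hV : ∀ r, HasDerivAt v
      (deriv (deriv dθ) r - lam * (deriv θ r - deriv dθ r)) r := by
    intro r
    rw [hv]
    exact ((hdθ' r).hasDerivAt.sub (((hE r).const_mul lam)))
  have hvderiv : ∀ r, deriv v r
      = deriv (deriv dθ) r - lam * (deriv θ r - deriv dθ r) := fun r => (hV r).deriv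
  -- θ'' from dynamics
  have hθ2 : deriv (deriv θ) t
      = deriv v t - γ * (deriv θ t - deriv dθ t) - (c₁ * sg ε (s t) + c₂ * s t) := by
    rw [hdyn t, htau t]
    field_simp
    ring
  -- derivative of s
  have hS : HasDerivAt s (-(c₁ * sg ε (s t) + c₂ * s t)) t := by
    have : HasDerivAt s
        (γ * (deriv θ t - deriv dθ t)
          + (deriv (deriv θ) t
            - (deriv (deriv dθ) t - lam * (deriv θ t - deriv dθ t)))) t := by
      rw [hs]
      exact (((hE t).const_mul γ).add ((hθ' t).hasDerivAt.sub (hV t)))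
    convert this using 1
    rw [hθ2, hvderiv t]
    ring
  constructor
  · have := ((hS.fun_pow 2).const_mul ((1:ℝ)/2))
    refine this.congr_deriv ?_
    ring
  · have h1 := sg_mul_nonneg hε0 (s t)
    nlinarith [sq_nonneg (s t)]
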